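/- Telescoping cancellation of dissipation: Let c1 > c2 ≥ 0, ρ ≥ 0, r ∈ [0, ρ(c1−c2)) (with r = 0 allowed when ρ = 0), α > 1, and let i0 ≥ 1 be such that i0^α/(i0+1)^α ≥ (c2 + r/ρ)/c1 (interpreting r/ρ = 0 when ρ = r = 0). Then for any nonnegative reals y^k, …, y^N and x^k, …, x^N with y^i ≥ ρ x^i for all i, one has −Σ_{i=k}^{N} c1 y^i/(i−k+i0)^α + Σ_{i=k}^{N−1} c2 y^{i+1}/(i−k+i0)^α ≤ −r Σ_{i=k}^{N} x^i/(i−k+i0)^α. -/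

import Mathlib

/-- Telescoping cancellation of dissipation in the entropic ODE hierarchy:
`-∑_{i=k}^N c1 y^i/(i-k+i0)^α + ∑_{i=k}^{N-1} c2 y^{i+1}/(i-k+i0)^α
  ≤ -r ∑_{i=k}^N x^i/(i-k+i0)^α`. -/
theorem telescoping_dissipation_cancellation
    (c1 c2 ρ r α : ℝ) (N k : ℕ) (i0 : ℕ)
    (hc : c1 > c2) (hc2 : 0 ≤ c2) (hρ : 0 ≤ ρ) (hr0 : 0 ≤ r)
    (hr : r = 0 ∨ r < ρ * (c1 - c2))
    (hα : 1 < α) (hi0 : 1 ≤ i0)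
    (hi0cond : ((i0 : ℝ) ^ α) / ((i0 + 1 : ℕ) : ℝ) ^ α ≥ (c2 + r / ρ) / c1)
    (hkN : k ≤ N) (hk : 1 ≤ k)
    (x y : ℕ → ℝ)
    (hx : ∀ i ∈ Finset.Icc k N, 0 ≤ x i)
    (hy : ∀ i ∈ Finset.Icc k N, 0 ≤ y i)
    (hyx : ∀ i ∈ Finset.Icc k N, ρ * x i ≤ y i) :
    -∑ i ∈ Finset.Icc k N, c1 * y i / ((i - k + i0 : ℕ) : ℝ) ^ α
      + ∑ i ∈ Finset.Icc k (N - 1), c2 * y (i + 1) / ((i - k + i0 : ℕ) : ℝ) ^ α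
      ≤ -r * ∑ i ∈ Finset.Icc k N, x i / ((i - k + i0 : ℕ) : ℝ) ^ α := by
  set s := r / ρ with hs
  have hc1pos : 0 < c1 := lt_of_le_of_lt hc2 hc
  have hα0 : 0 ≤ α := by linarith
  have hspos : 0 ≤ s := div_nonneg hr0 hρ
  -- r * X ≤ s * Y
  have hrs : ∀ X Y : ℝ, 0 ≤ X → ρ * X ≤ Y → r * X ≤ s * Y := by
    intro X Y hX hXY
    rcases eq_or_lt_of_le hρ with h0 | h0
    · have hr0' : r = 0 := by
        rcases hr with h | h
        · exact h
        · exfalso; rw [← h0] at h; simp at h; linarith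
      simp [hr0', hs, ← h0]
    · have : r * X = s * (ρ * X) := by
        rw [hs]; field_simp
      rw [this]
      exact mul_le_mul_of_nonneg_left hXY hspos
  -- the ratio condition
  have hcond : c2 + s ≤ c1 * ((i0 : ℝ) ^ α / (((i0 : ℝ)) + 1) ^ α) := by
    have : (c2 + s) / c1 ≤ (i0 : ℝ) ^ α / ((i0 + 1 : ℕ) : ℝ) ^ α := hi0cond
    rw [div_le_iff₀ hc1pos] at this
    push_cast at this ⊢
    linarith
  -- positivity of powers
  have hpow : ∀ j : ℕ, 1 ≤ j → (0:ℝ) < (j : ℝ) ^ α := by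
    intro j hj
    apply Real.rpow_pos_of_pos
    exact_mod_cast Nat.lt_of_lt_of_le Nat.zero_lt_one hj
  have hpow1 : ∀ j : ℕ, 1 ≤ j → (0:ℝ) < ((j : ℝ) + 1) ^ α := by
    intro j hj
    apply Real.rpow_pos_of_pos
    have : (0:ℝ) < (j:ℝ) := by exact_mod_cast Nat.lt_of_lt_of_le Nat.zero_lt_one hj
    linarith
  -- monotonicity of j ↦ j^α/(j+1)^α
  have hmono : ∀ j : ℕ, i0 ≤ j →
      (i0 : ℝ) ^ α / ((i0 : ℝ) + 1) ^ α ≤ (j : ℝ) ^ α / ((j : ℝ) + 1) ^ α := by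
    intro j hj
    have hi0R : (1:ℝ) ≤ (i0:ℝ) := by exact_mod_cast hi0
    have hjR : (i0:ℝ) ≤ (j:ℝ) := by exact_mod_cast hj
    have h1 : (i0 : ℝ) / ((i0:ℝ) + 1) ≤ (j : ℝ) / ((j:ℝ) + 1) := by
      rw [div_le_div_iff₀ (by linarith) (by linarith)]
      nlinarith
    have e1 : (i0 : ℝ) ^ α / ((i0 : ℝ) + 1) ^ α = ((i0:ℝ) / ((i0:ℝ)+1)) ^ α := by
      rw [Real.div_rpow (by linarith) (by linarith)]
    have e2 : (j : ℝ) ^ α / ((j : ℝ) + 1) ^ α = ((j:ℝ) / ((j:ℝ)+1)) ^ α := by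
      rw [Real.div_rpow (by linarith) (by linarith)]
    rw [e1, e2]
    exact Real.rpow_le_rpow (by positivity) h1 hα0
  -- coefficient inequality
  have hcoef : ∀ j : ℕ, i0 ≤ j →
      c2 / (j : ℝ) ^ α + s / ((j : ℝ) + 1) ^ α ≤ c1 / ((j : ℝ) + 1) ^ α := by
    intro j hj
    have hj1 : 1 ≤ j := le_trans hi0 hj
    have hpj := hpow j hj1
    have hpj1 := hpow1 j hj1
    have h1 : c2 + s ≤ c1 * ((j : ℝ) ^ α / ((j : ℝ) + 1) ^ α) :=
      le_trans hcond (by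
        have := hmono j hj
        nlinarith)
    -- from c2 + s ≤ c1 * j^α/(j+1)^α get (c2+s)*(j+1)^α ≤ c1*j^α
    have h2 : (c2 + s) * ((j : ℝ) + 1) ^ α ≤ c1 * (j : ℝ) ^ α := by
      calc (c2 + s) * ((j : ℝ) + 1) ^ α
          ≤ c1 * ((j : ℝ) ^ α / ((j : ℝ) + 1) ^ α) * ((j : ℝ) + 1) ^ α :=
            mul_le_mul_of_nonneg_right h1 (le_of_lt hpj1)
        _ = c1 * ((j : ℝ) ^ α / ((j : ℝ) + 1) ^ α * ((j : ℝ) + 1) ^ α) := by ring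
        _ = c1 * (j : ℝ) ^ α := by rw [div_mul_cancel₀ _ (ne_of_gt hpj1)]
    -- s/(j+1)^α ≤ s/j^α
    have h3 : s / ((j : ℝ) + 1) ^ α ≤ s / (j : ℝ) ^ α := by
      apply div_le_div_of_nonneg_left hspos hpj
      exact Real.rpow_le_rpow (le_of_lt (by exact_mod_cast Nat.lt_of_lt_of_le Nat.zero_lt_one hj1)) (by linarith) hα0
    have h4 : (c2 + s) / (j : ℝ) ^ α ≤ c1 / ((j : ℝ) + 1) ^ α := by
      rw [div_le_div_iff₀ hpj hpj1]
      linarith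
    calc c2 / (j : ℝ) ^ α + s / ((j : ℝ) + 1) ^ α
        ≤ c2 / (j : ℝ) ^ α + s / (j : ℝ) ^ α := by linarith
      _ = (c2 + s) / (j : ℝ) ^ α := by ring
      _ ≤ c1 / ((j : ℝ) + 1) ^ α := h4
  -- key termwise inequality
  have key : ∀ j : ℕ, i0 ≤ j → ∀ X Y : ℝ, 0 ≤ X → 0 ≤ Y → ρ * X ≤ Y →
      -(c1 * Y / ((j : ℝ) + 1) ^ α) + c2 * Y / (j : ℝ) ^ α ≤ -(r * X / ((j : ℝ) + 1) ^ α) := by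
    intro j hj X Y hX hY hXY
    have hj1 : 1 ≤ j := le_trans hi0 hj
    have hpj := hpow j hj1
    have hpj1 := hpow1 j hj1
    have h1 := hcoef j hj
    have h2 : c2 * Y / (j : ℝ) ^ α + s * Y / ((j : ℝ) + 1) ^ α ≤ c1 * Y / ((j : ℝ) + 1) ^ α := by
      have := mul_le_mul_of_nonneg_right h1 hY
      calc c2 * Y / (j : ℝ) ^ α + s * Y / ((j : ℝ) + 1) ^ α
          = (c2 / (j : ℝ) ^ α + s / ((j : ℝ) + 1) ^ α) * Y := by ring
        _ ≤ (c1 / ((j : ℝ) + 1) ^ α) * Y := this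
        _ = c1 * Y / ((j : ℝ) + 1) ^ α := by ring
    have h3 : r * X / ((j : ℝ) + 1) ^ α ≤ s * Y / ((j : ℝ) + 1) ^ α :=
      (div_le_div_iff_of_pos_right hpj1).mpr (hrs X Y hX hXY)
    linarith
  -- s ≤ c1
  have hsc1 : s ≤ c1 := by
    have hi0R : (1:ℝ) ≤ (i0:ℝ) := by exact_mod_cast hi0
    have hratio : (i0 : ℝ) ^ α / ((i0 : ℝ) + 1) ^ α ≤ 1 := by
      rw [div_le_one (hpow1 i0 hi0)]
      exact Real.rpow_le_rpow (by linarith) (by linarith) hα0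
    nlinarith [hcond]
  -- base termwise inequality
  have basekey : ∀ X Y : ℝ, 0 ≤ X → 0 ≤ Y → ρ * X ≤ Y →
      -(c1 * Y / (i0 : ℝ) ^ α) ≤ -(r * X / (i0 : ℝ) ^ α) := by
    intro X Y hX hY hXY
    have hpi0 := hpow i0 hi0
    have h1 : r * X ≤ c1 * Y := le_trans (hrs X Y hX hXY)
      (mul_le_mul_of_nonneg_right hsc1 hY)
    have := (div_le_div_iff_of_pos_right hpi0).mpr h1
    linarith
  clear hr hi0cond hcond hmono hcoef
  -- induction on N
  induction N, hkN using Nat.le_induction with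
  | base =>
    have h1 : Finset.Icc k (k - 1) = ∅ := Finset.Icc_eq_empty (by omega)
    have h2 : k - k + i0 = i0 := by omega
    simp only [h1, Finset.sum_empty, Finset.Icc_self, Finset.sum_singleton, h2, add_zero]
    have hk' : k ∈ Finset.Icc k k := by simp
    have := basekey (x k) (y k) (hx k hk') (hy k hk') (hyx k hk')
    calc -(c1 * y k / (i0:ℝ) ^ α) ≤ -(r * x k / (i0:ℝ) ^ α) := this
      _ = -r * (x k / (i0:ℝ) ^ α) := by ring
  | succ N hkN ih =>
    obtain ⟨M, rfl⟩ : ∃ M, N = M + 1 := ⟨N - 1, by omega⟩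
    -- restrict hypotheses
    have hsub : Finset.Icc k (M + 1) ⊆ Finset.Icc k (M + 1 + 1) := by
      apply Finset.Icc_subset_Icc_right; omega
    have hx' := fun i hi => hx i (hsub hi)
    have hy' := fun i hi => hy i (hsub hi)
    have hyx' := fun i hi => hyx i (hsub hi)
    have IH := ih hx' hy' hyx'
    -- split the sums
    simp only [Nat.add_sub_cancel] at IH ⊢
    have eA : ∑ i ∈ Finset.Icc k (M + 1 + 1), c1 * y i / ((i - k + i0 : ℕ) : ℝ) ^ α
        = ∑ i ∈ Finset.Icc k (M + 1), c1 * y i / ((i - k + i0 : ℕ) : ℝ) ^ α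
          + c1 * y (M + 1 + 1) / ((M + 1 + 1 - k + i0 : ℕ) : ℝ) ^ α :=
      Finset.sum_Icc_succ_top (by omega) _
    have eB : ∑ i ∈ Finset.Icc k (M + 1), c2 * y (i + 1) / ((i - k + i0 : ℕ) : ℝ) ^ α
        = ∑ i ∈ Finset.Icc k M, c2 * y (i + 1) / ((i - k + i0 : ℕ) : ℝ) ^ α
          + c2 * y (M + 1 + 1) / ((M + 1 - k + i0 : ℕ) : ℝ) ^ α :=
      Finset.sum_Icc_succ_top (by omega) _
    have eC : ∑ i ∈ Finset.Icc k (M + 1 + 1), x i / ((i - k + i0 : ℕ) : ℝ) ^ α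
        = ∑ i ∈ Finset.Icc k (M + 1), x i / ((i - k + i0 : ℕ) : ℝ) ^ α
          + x (M + 1 + 1) / ((M + 1 + 1 - k + i0 : ℕ) : ℝ) ^ α :=
      Finset.sum_Icc_succ_top (by omega) _
    rw [eA, eB, eC]
    -- the new terms
    have hmem : M + 1 + 1 ∈ Finset.Icc k (M + 1 + 1) := by simp; omega
    have hj : i0 ≤ M + 1 - k + i0 := by omega
    have ecast : ((M + 1 + 1 - k + i0 : ℕ) : ℝ) = ((M + 1 - k + i0 : ℕ) : ℝ) + 1 := by
      have : M + 1 + 1 - k + i0 = (M + 1 - k + i0) + 1 := by omega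
      rw [this]; push_cast; ring
    have hk2 := key (M + 1 - k + i0) hj (x (M + 1 + 1)) (y (M + 1 + 1))
      (hx _ hmem) (hy _ hmem) (hyx _ hmem)
    rw [ecast]
    rw [neg_add, neg_mul, mul_add, neg_add]
    have : -∑ i ∈ Finset.Icc k (M + 1), c1 * y i / ((i - k + i0 : ℕ) : ℝ) ^ α
        + (∑ i ∈ Finset.Icc k M, c2 * y (i + 1) / ((i - k + i0 : ℕ) : ℝ) ^ α
          + c2 * y (M + 1 + 1) / ((M + 1 - k + i0 : ℕ) : ℝ) ^ α)
        + -(c1 * y (M + 1 + 1) / (((M + 1 - k + i0 : ℕ) : ℝ) + 1) ^ α)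
        ≤ -(r * ∑ i ∈ Finset.Icc k (M + 1), x i / ((i - k + i0 : ℕ) : ℝ) ^ α)
          + -(r * (x (M + 1 + 1) / (((M + 1 - k + i0 : ℕ) : ℝ) + 1) ^ α)) := by
      have hr2 : -(r * (x (M + 1 + 1) / (((M + 1 - k + i0 : ℕ) : ℝ) + 1) ^ α))
          = -(r * x (M + 1 + 1) / (((M + 1 - k + i0 : ℕ) : ℝ) + 1) ^ α) := by ring
      rw [hr2]
      have hIH' : -∑ i ∈ Finset.Icc k (M + 1), c1 * y i / ((i - k + i0 : ℕ) : ℝ) ^ α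
          + ∑ i ∈ Finset.Icc k M, c2 * y (i + 1) / ((i - k + i0 : ℕ) : ℝ) ^ α
          ≤ -(r * ∑ i ∈ Finset.Icc k (M + 1), x i / ((i - k + i0 : ℕ) : ℝ) ^ α) := by
        have := IH; linarith [IH]
      linarith [hk2]
    linarith [this]
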